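/- Let F be a reduced monomial translation-dilation invariant system of dimension k with index set Λ and density γ, and let r ≥ 1 be an integer. Let K be a tuple of positive reals, set Q_i = ⌈2rK_i⌉ for each i, and let τ be a tuple of positive reals with τ_i ≤ K_i for each i. Then for any x^{(1)},…,x^{(2r)} ∈ ℤ^k with 0 < x^{(j)}_i ≤ τ_i for all i,j, one has Σ_α e(Σ_{j=1}^{2r} (−1)^j θ_α(x^{(j)})) = Q^γ if Σ_{j=1}^{2r} (−1)^j (x^{(j)})^β = 0 for every β ∈ Λ, and Σ_α e(Σ_{j=1}^{2r} (−1)^j θ_α(x^{(j)})) = 0 otherwise; here α ranges over all indices of the dissection with parameter Q, and e(t) = e^{2πi t}. -/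
import Mathlib


open scoped BigOperators

/-- `e(t) = e^{2πit}`. -/
noncomputable def e (t : ℝ) : ℂ := Complex.exp (2 * Real.pi * Complex.I * t)

lemma e_sum {ι : Type*} (s : Finset ι) (f : ι → ℝ) : e (∑ i ∈ s, f i) = ∏ i ∈ s, e (f i) := by
  unfold e
  rw [← Complex.exp_sum]
  push_cast
  rw [Finset.mul_sum]

lemma e_nat_mul (n : ℕ) (t : ℝ) : e ((n : ℝ) * t) = e t ^ n := by
  unfold e
  rw [← Complex.exp_nat_mul]
  push_cast
  ring_nf

lemma e_int (n : ℤ) : e (n : ℝ) = 1 := by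
  unfold e
  rw [show (2 * Real.pi * Complex.I * ((n:ℝ):ℂ)) = (n:ℤ) * (2 * Real.pi * Complex.I) by push_cast; ring]
  exact Complex.exp_int_mul_two_pi_mul_I n

lemma char_sum (M : ℕ) (hM : 0 < M) (S : ℤ) :
    ∑ c ∈ Finset.range M, e ((c : ℝ) * S / M) = if (M : ℤ) ∣ S then (M : ℂ) else 0 := by
  have hM0 : (M : ℝ) ≠ 0 := Nat.cast_ne_zero.mpr hM.ne'
  have hz : ∀ c : ℕ, e ((c : ℝ) * S / M) = e ((S : ℝ) / M) ^ c := by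
    intro c
    rw [← e_nat_mul, mul_div_assoc]
  have hpow : e ((S : ℝ) / M) ^ M = 1 := by
    rw [← e_nat_mul]
    have : (M : ℝ) * ((S:ℝ)/M) = (S : ℝ) := by field_simp
    rw [this]
    exact e_int S
  have hiff : e ((S : ℝ) / M) = 1 ↔ (M : ℤ) ∣ S := by
    constructor
    · intro h
      unfold e at h
      rw [Complex.exp_eq_one_iff] at h
      obtain ⟨n, hn⟩ := h
      have hpi : (2 * (Real.pi : ℂ) * Complex.I) ≠ 0 := by
        simp [Real.pi_ne_zero, Complex.I_ne_zero]
      have h2 : (((S : ℝ) / M : ℝ) : ℂ) = (n : ℂ) := by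
        have hn' : (((S : ℝ) / M : ℝ) : ℂ) * (2 * Real.pi * Complex.I) = (n : ℂ) * (2 * Real.pi * Complex.I) := by
          rw [← hn]; ring
        exact mul_right_cancel₀ hpi hn'
      have h3 : (S : ℝ) / M = (n : ℝ) := by exact_mod_cast h2
      have h4 : (S : ℝ) = (n : ℝ) * M := by field_simp at h3; linarith
      exact ⟨n, by exact_mod_cast h4.trans (mul_comm _ _)⟩
    · rintro ⟨n, rfl⟩
      have : ((M * n : ℤ) : ℝ) / M = (n : ℝ) := by push_cast; field_simp
      rw [show (((M : ℤ) * n : ℤ) : ℝ) / (M:ℝ) = ((n:ℤ) : ℝ) from this]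
      exact e_int n
  simp only [hz]
  by_cases hd : (M : ℤ) ∣ S
  · rw [if_pos hd]
    have h1 : e ((S : ℝ) / M) = 1 := hiff.mpr hd
    simp [h1]
  · rw [if_neg hd]
    have h1 : e ((S : ℝ) / M) ≠ 1 := fun h => hd (hiff.mp h)
    rw [geom_sum_eq h1, hpow]
    simp

lemma one_le_prod_real {ι : Type*} (s : Finset ι) (f : ι → ℝ) (h : ∀ i ∈ s, 1 ≤ f i) :
    1 ≤ ∏ i ∈ s, f i := by
  have := Finset.prod_le_prod (f := fun _ => (1 : ℝ)) (g := f) (fun i _ => zero_le_one) h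
  simpa using this


/-- `Λ` is the index set of a reduced monomial translation-dilation invariant system of
dimension `k`. -/
def IsTDI {k : ℕ} (Λ : Finset (Fin k →₀ ℕ)) : Prop :=
  (0 : Fin k →₀ ℕ) ∉ Λ ∧
  (∀ β ∈ Λ, ∀ α : Fin k →₀ ℕ, α ≠ 0 → α ≤ β → α ∈ Λ) ∧
  (∀ i : Fin k, ∃ β ∈ Λ, 1 ≤ β i)

/-- The polynomial `θ_α(x) = Σ_{β ∈ Λ₀} c_β Q^{−β} x^β` attached to an index `α = (c_β)`. -/
noncomputable def theta {k : ℕ} (Λ₀ : Finset (Fin k →₀ ℕ)) (Q : Fin k → ℕ)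
    (c : {β // β ∈ Λ₀} → ℕ) (x : Fin k → ℤ) : ℝ :=
  ∑ β : {β // β ∈ Λ₀},
    (c β : ℝ) / (∏ i, (Q i : ℝ) ^ (β.1 i)) * ∏ i, (x i : ℝ) ^ (β.1 i)

/-- The finite set of indices `α` of the dissection with parameter `Q`. -/
noncomputable def indexFinset {k : ℕ} (Λ₀ : Finset (Fin k →₀ ℕ)) (Q : Fin k → ℕ) :
    Finset ({β // β ∈ Λ₀} → ℕ) :=
  Fintype.piFinset fun β => Finset.range (∏ i, Q i ^ (β.1 i))

theorem stmt_15 (k r : ℕ) (hk : 0 < k) (hr : 1 ≤ r)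
    (Λ : Finset (Fin k →₀ ℕ)) (hΛ : IsTDI Λ)
    (K τ : Fin k → ℝ) (hK : ∀ i, 0 < K i) (hτ : ∀ i, 0 < τ i ∧ τ i ≤ K i)
    (Q : Fin k → ℕ) (hQ : ∀ i, Q i = ⌈(2 * r : ℝ) * K i⌉₊)
    (x : Fin (2 * r) → Fin k → ℤ) (hx : ∀ j i, 0 < x j i ∧ ((x j i : ℝ)) ≤ τ i) :
    ((∀ β ∈ Λ, ∑ j : Fin (2 * r), (-1 : ℤ) ^ ((j : ℕ) + 1) * ∏ i, (x j i) ^ (β i) = 0) →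
      ∑ c ∈ indexFinset (insert 0 Λ) Q,
          e (∑ j : Fin (2 * r), (-1 : ℝ) ^ ((j : ℕ) + 1) * theta (insert 0 Λ) Q c (x j)) =
        ∏ i, (Q i : ℂ) ^ (∑ β ∈ Λ, β i)) ∧
    ((¬ ∀ β ∈ Λ, ∑ j : Fin (2 * r), (-1 : ℤ) ^ ((j : ℕ) + 1) * ∏ i, (x j i) ^ (β i) = 0) →
      ∑ c ∈ indexFinset (insert 0 Λ) Q,
          e (∑ j : Fin (2 * r), (-1 : ℝ) ^ ((j : ℕ) + 1) * theta (insert 0 Λ) Q c (x j)) =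
        0) := by
  classical
  obtain ⟨h0, hdown, hcov⟩ := hΛ
  set Λ₀ := insert (0 : Fin k →₀ ℕ) Λ with hΛ₀
  set M : {β // β ∈ Λ₀} → ℕ := fun β => ∏ i, Q i ^ (β.1 i) with hMdef
  set S : {β // β ∈ Λ₀} → ℤ :=
    fun β => ∑ j : Fin (2 * r), (-1 : ℤ) ^ ((j : ℕ) + 1) * ∏ i, (x j i) ^ (β.1 i) with hSdef
  have hr2 : 0 < 2 * r := by omega
  have hr1 : 1 < 2 * r := by omega
  have hrR : (1 : ℝ) ≤ (r : ℝ) := by exact_mod_cast hr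
  have hτ1 : ∀ i, 1 ≤ τ i := by
    intro i
    have h1 : (1 : ℝ) ≤ (x ⟨0, hr2⟩ i : ℝ) := by exact_mod_cast (hx ⟨0, hr2⟩ i).1
    exact h1.trans (hx ⟨0, hr2⟩ i).2
  have hK1 : ∀ i, 1 ≤ K i := fun i => (hτ1 i).trans (hτ i).2
  have hQge : ∀ i, (2 * r : ℝ) * K i ≤ Q i := by
    intro i; rw [hQ i]; exact Nat.le_ceil _
  have hQpos : ∀ i, 0 < Q i := by
    intro i
    have : (0 : ℝ) < (Q i : ℝ) := lt_of_lt_of_le (by nlinarith [hK i]) (hQge i)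
    exact_mod_cast this
  have hMpos : ∀ β : {β // β ∈ Λ₀}, 0 < M β := by
    intro β; exact Finset.prod_pos fun i _ => pow_pos (hQpos i) _
  have hMcast : ∀ β : {β // β ∈ Λ₀}, (M β : ℝ) = ∏ i, (Q i : ℝ) ^ (β.1 i) := by
    intro β; simp [hMdef]
  -- bound
  have hbound : ∀ β : {β // β ∈ Λ₀}, β.1 ≠ 0 → |S β| < (M β : ℤ) := by
    intro β hβ
    set Kb : ℝ := ∏ i, K i ^ (β.1 i) with hKb
    have hKb1 : (1 : ℝ) ≤ Kb := by
      rw [hKb]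
      exact one_le_prod_real _ _ fun i _ => one_le_pow₀ (hK1 i)
    have hP : ∀ j, (1 : ℝ) ≤ ∏ i, (x j i : ℝ) ^ (β.1 i) ∧
        ∏ i, (x j i : ℝ) ^ (β.1 i) ≤ Kb := by
      intro j
      have hx1 : ∀ i, (1 : ℝ) ≤ (x j i : ℝ) := by
        intro i
        have : (1 : ℤ) ≤ x j i := (hx j i).1
        exact_mod_cast this
      constructor
      · exact one_le_prod_real _ _ fun i _ => one_le_pow₀ (hx1 i)
      · rw [hKb]
        refine Finset.prod_le_prod (fun i _ => pow_nonneg (by linarith [hx1 i]) _) fun i _ => ?_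
        refine pow_le_pow_left₀ (by exact_mod_cast (hx j i).1.le) ?_ _
        exact (hx j i).2.trans (hτ i).2
    have hScast : (S β : ℝ) =
        ∑ j : Fin (2 * r), (-1 : ℝ) ^ ((j : ℕ) + 1) * ∏ i, (x j i : ℝ) ^ (β.1 i) := by
      rw [hSdef]; push_cast; rfl
    have hterm_le : ∀ j : Fin (2 * r),
        (-1 : ℝ) ^ ((j : ℕ) + 1) * ∏ i, (x j i : ℝ) ^ (β.1 i) ≤ Kb := by
      intro j
      rcases Nat.even_or_odd ((j : ℕ) + 1) with he | ho
      · rw [Even.neg_one_pow he, one_mul]; exact (hP j).2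
      · rw [Odd.neg_one_pow ho, neg_one_mul]
        nlinarith [(hP j).1, hKb1]
    have hterm_ge : ∀ j : Fin (2 * r),
        -Kb ≤ (-1 : ℝ) ^ ((j : ℕ) + 1) * ∏ i, (x j i : ℝ) ^ (β.1 i) := by
      intro j
      rcases Nat.even_or_odd ((j : ℕ) + 1) with he | ho
      · rw [Even.neg_one_pow he, one_mul]
        nlinarith [(hP j).1, hKb1]
      · rw [Odd.neg_one_pow ho, neg_one_mul, neg_le_neg_iff]
        exact (hP j).2
    have hSupper : (S β : ℝ) < (2 * r : ℕ) * Kb := by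
      rw [hScast]
      have h := Finset.sum_lt_sum (s := Finset.univ)
          (f := fun j : Fin (2 * r) =>
            (-1 : ℝ) ^ ((j : ℕ) + 1) * ∏ i, (x j i : ℝ) ^ (β.1 i))
          (g := fun _ => Kb)
          (fun j _ => hterm_le j)
          ⟨⟨0, hr2⟩, Finset.mem_univ _, by
            show (-1 : ℝ) ^ (0 + 1) * _ < Kb
            rw [pow_one, neg_one_mul]
            nlinarith [(hP ⟨0, hr2⟩).1, hKb1]⟩
      simpa using h
    have hSlower : -((2 * r : ℕ) * Kb) < (S β : ℝ) := by
      rw [hScast]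
      have h := Finset.sum_lt_sum (s := Finset.univ)
          (f := fun _ : Fin (2 * r) => -Kb)
          (g := fun j : Fin (2 * r) =>
            (-1 : ℝ) ^ ((j : ℕ) + 1) * ∏ i, (x j i : ℝ) ^ (β.1 i))
          (fun j _ => hterm_ge j)
          ⟨⟨1, hr1⟩, Finset.mem_univ _, by
            show -Kb < (-1 : ℝ) ^ (1 + 1) * _
            norm_num
            nlinarith [(hP ⟨1, hr1⟩).1, hKb1]⟩
      simp only [Finset.sum_const, Finset.card_univ, Fintype.card_fin, nsmul_eq_mul] at h
      linarith [h]
    have hn1 : 1 ≤ ∑ i, β.1 i := by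
      obtain ⟨i0, hi0⟩ : ∃ i, β.1 i ≠ 0 := by
        by_contra hc
        push_neg at hc
        exact hβ (Finsupp.ext fun i => hc i)
      calc 1 ≤ β.1 i0 := Nat.one_le_iff_ne_zero.mpr hi0
        _ ≤ ∑ i, β.1 i := Finset.single_le_sum (fun i _ => Nat.zero_le _) (Finset.mem_univ i0)
    have hMge : ((2 * r : ℕ) : ℝ) * Kb ≤ (M β : ℝ) := by
      rw [hMcast]
      set R2 : ℝ := 2 * (r : ℝ) with hR2
      have hR2nn : (0 : ℝ) ≤ R2 := by rw [hR2]; positivity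
      have h1 : ∏ i, (R2 * K i) ^ (β.1 i) ≤ ∏ i, (Q i : ℝ) ^ (β.1 i) := by
        refine Finset.prod_le_prod
          (fun i _ => pow_nonneg (mul_nonneg hR2nn (hK i).le) _) fun i _ => ?_
        refine pow_le_pow_left₀ (mul_nonneg hR2nn (hK i).le) ?_ _
        rw [hR2]; exact hQge i
      have h2 : ∏ i, (R2 * K i) ^ (β.1 i)
          = R2 ^ (∑ i, β.1 i) * Kb := by
        rw [hKb]
        simp only [mul_pow]
        rw [Finset.prod_mul_distrib, Finset.prod_pow_eq_pow_sum]
      have h3 : R2 ≤ R2 ^ (∑ i, β.1 i) := by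
        calc R2 = R2 ^ 1 := (pow_one _).symm
          _ ≤ _ := pow_le_pow_right₀ (by rw [hR2]; linarith) hn1
      have hKb0 : (0 : ℝ) < Kb := lt_of_lt_of_le one_pos hKb1
      push_cast
      rw [← hR2]
      nlinarith [h1, h2, h3, hKb0]
    have habs : |(S β : ℝ)| < (M β : ℝ) := by
      rw [abs_lt]
      constructor <;> nlinarith [hSupper, hSlower, hMge]
    exact_mod_cast habs
  -- exponent rewrite
  have hexp : ∀ c : {β // β ∈ Λ₀} → ℕ,
      (∑ j : Fin (2 * r), (-1 : ℝ) ^ ((j : ℕ) + 1) * theta Λ₀ Q c (x j))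
        = ∑ β : {β // β ∈ Λ₀}, (c β : ℝ) * (S β : ℝ) / (M β : ℝ) := by
    intro c
    unfold theta
    simp only [Finset.mul_sum]
    rw [Finset.sum_comm]
    refine Finset.sum_congr rfl fun β _ => ?_
    have hS' : (S β : ℝ) =
        ∑ j : Fin (2 * r), (-1 : ℝ) ^ ((j : ℕ) + 1) * ∏ i, (x j i : ℝ) ^ (β.1 i) := by
      rw [hSdef]; push_cast; rfl
    rw [hS', hMcast β, Finset.mul_sum, Finset.sum_div]
    refine Finset.sum_congr rfl fun j _ => ?_
    ring
  have key : ∑ c ∈ indexFinset Λ₀ Q,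
      e (∑ j : Fin (2 * r), (-1 : ℝ) ^ ((j : ℕ) + 1) * theta Λ₀ Q c (x j))
      = ∏ β : {β // β ∈ Λ₀}, if (M β : ℤ) ∣ S β then (M β : ℂ) else 0 := by
    have h1 : ∀ c ∈ indexFinset Λ₀ Q,
        e (∑ j : Fin (2 * r), (-1 : ℝ) ^ ((j : ℕ) + 1) * theta Λ₀ Q c (x j))
          = ∏ β : {β // β ∈ Λ₀}, e ((c β : ℝ) * (S β : ℝ) / (M β : ℝ)) := by
      intro c _
      rw [hexp c]
      exact e_sum Finset.univ _
    rw [Finset.sum_congr rfl h1]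
    simp only [indexFinset]
    refine Eq.trans (Finset.prod_univ_sum (fun β : {β // β ∈ Λ₀} => Finset.range (M β))
      (fun β n => e ((n : ℝ) * (S β : ℝ) / (M β : ℝ)))).symm ?_
    exact Finset.prod_congr rfl fun β _ => char_sum (M β) (hMpos β) (S β)
  constructor
  · intro hall
    rw [key]
    have hdvd : ∀ β : {β // β ∈ Λ₀}, (M β : ℤ) ∣ S β := by
      intro β
      rcases Finset.mem_insert.mp β.2 with h | h
      · have hM1 : M β = 1 := by rw [hMdef]; simp [h]
        rw [hM1]; exact one_dvd _
      · have hS0 : S β = 0 := hall β.1 h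
        rw [hS0]; exact dvd_zero _
    rw [Finset.prod_congr rfl fun β _ => if_pos (hdvd β)]
    have hMc : ∀ β : {β // β ∈ Λ₀}, ((M β : ℂ)) = ∏ i, (Q i : ℂ) ^ (β.1 i) := by
      intro β; rw [hMdef]; push_cast; rfl
    rw [Finset.prod_congr rfl fun β _ => hMc β, Finset.prod_comm]
    refine Finset.prod_congr rfl fun i _ => ?_
    rw [Finset.prod_pow_eq_pow_sum]
    congr 1
    rw [Finset.sum_coe_sort Λ₀ (fun β => β i), hΛ₀, Finset.sum_insert h0]
    simp
  · intro hnot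
    push_neg at hnot
    obtain ⟨β₀, hβ₀, hne⟩ := hnot
    rw [key]
    refine Finset.prod_eq_zero
      (Finset.mem_univ (⟨β₀, Finset.mem_insert_of_mem hβ₀⟩ : {β // β ∈ Λ₀})) ?_
    have hb0 : β₀ ≠ 0 := fun h => h0 (h ▸ hβ₀)
    have hSne : S ⟨β₀, Finset.mem_insert_of_mem hβ₀⟩ ≠ 0 := by
      rw [hSdef]; exact hne
    exact if_neg fun hd => hSne (Int.eq_zero_of_abs_lt_dvd hd (hbound _ hb0))
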